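/- Let Φ : M_n(ℂ) → M_m(ℂ) be a linear map such that Φ(P) is a projection for every projection P, and Φ(P + Q) = Φ(P) + Φ(Q) whenever P, Q are orthogonal projections. Then Φ(H) is self-adjoint and Φ(H²) = Φ(H)² for every self-adjoint H ∈ M_n(ℂ). -/

import Mathlib

open Matrix

lemma ortho_of_anticomm {m : ℕ} (P Q : Matrix (Fin m) (Fin m) ℂ)
    (hP2 : P * P = P) (h : P * Q + Q * P = 0) : P * Q = 0 := by
  have h1 : P * Q + P * Q * P = 0 := by
    have := congrArg (P * ·) h
    simpa [mul_add, ← mul_assoc, hP2] using this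
  have h2 : P * Q * P + Q * P = 0 := by
    have h2' := congrArg (· * P) h
    simp only [add_mul, zero_mul] at h2'
    rwa [mul_assoc Q P P, hP2] at h2'
  have h3 : P * Q = Q * P := by
    have e1 : P * Q = -(P * Q * P) := eq_neg_of_add_eq_zero_left h1
    have e2 : Q * P = -(P * Q * P) := eq_neg_of_add_eq_zero_right h2
    rw [e1, e2]
  rw [← h3] at h
  have h2smul : (2 : ℂ) • (P * Q) = 0 := by rw [two_smul]; exact h
  rcases smul_eq_zero.mp h2smul with h' | h'
  · exact absurd h' two_ne_zero
  · exact h'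

lemma sum_smul_mul_ortho {m k : ℕ} (A : Fin k → Matrix (Fin m) (Fin m) ℂ) (c : Fin k → ℂ)
    (h : ∀ i j, A i * A j = if i = j then A i else 0) :
    (∑ i, c i • A i) * (∑ i, c i • A i) = ∑ i, (c i ^ 2) • A i := by
  rw [Finset.sum_mul_sum]
  refine Finset.sum_congr rfl fun i _ => ?_
  rw [Finset.sum_eq_single i]
  · rw [smul_mul_assoc, mul_smul_comm, h, if_pos rfl, smul_smul, ← pow_two]
  · intro j _ hji
    rw [smul_mul_assoc, mul_smul_comm, h, if_neg (fun hh => hji hh.symm), smul_zero, smul_zero]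
  · intro habs; exact absurd (Finset.mem_univ i) habs

/-- A linear map taking projections to projections and orthoadditive on projections is
self-adjoint on hermitian elements and squares them correctly. -/
theorem stmt11 {n m : ℕ}
    (Φ : Matrix (Fin n) (Fin n) ℂ →ₗ[ℂ] Matrix (Fin m) (Fin m) ℂ)
    (hproj : ∀ P : Matrix (Fin n) (Fin n) ℂ, P.IsHermitian → P * P = P →
      (Φ P).IsHermitian ∧ Φ P * Φ P = Φ P)
    (hadd : ∀ P Q : Matrix (Fin n) (Fin n) ℂ, P.IsHermitian → P * P = P →
      Q.IsHermitian → Q * Q = Q → P * Q = 0 → Φ (P + Q) = Φ P + Φ Q)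
    (H : Matrix (Fin n) (Fin n) ℂ) (hH : H.IsHermitian) :
    (Φ H).IsHermitian ∧ Φ (H * H) = Φ H * Φ H := by
  classical
  set U : Matrix (Fin n) (Fin n) ℂ := (hH.eigenvectorUnitary : Matrix (Fin n) (Fin n) ℂ) with hU
  have hUstar : star U * U = 1 := Unitary.coe_star_mul_self _
  set c : Fin n → ℝ := hH.eigenvalues with hc
  set E : Fin n → Matrix (Fin n) (Fin n) ℂ :=
    fun i => U * diagonal (Pi.single i 1) * star U with hE
  have hstarsingle : ∀ i : Fin n, star (Pi.single i 1 : Fin n → ℂ) = Pi.single i 1 := by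
    intro i
    funext j
    by_cases hji : j = i <;> simp [hji, Pi.single_apply]
  have hsingle : ∀ i j : Fin n,
      (fun x => (Pi.single i 1 : Fin n → ℂ) x * (Pi.single j 1 : Fin n → ℂ) x)
        = if i = j then Pi.single i 1 else 0 := by
    intro i j
    funext x
    by_cases hx : x = i <;> by_cases hij : i = j <;> simp_all [Pi.single_apply]
  have hEherm : ∀ i, (E i).IsHermitian := by
    intro i
    have hd : (diagonal (Pi.single i 1 : Fin n → ℂ)).IsHermitian := by
      rw [Matrix.IsHermitian, diagonal_conjTranspose, hstarsingle]
    have := Matrix.isHermitian_mul_mul_conjTranspose U hd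
    simpa [hE, Matrix.star_eq_conjTranspose] using this
  have hEmul : ∀ i j, E i * E j = if i = j then E i else 0 := by
    intro i j
    have key : E i * E j = U * (diagonal (Pi.single i 1) * diagonal (Pi.single j 1)) * star U := by
      simp only [hE, Matrix.mul_assoc]
      rw [← Matrix.mul_assoc (star U) U, hUstar, Matrix.one_mul]
    rw [key, diagonal_mul_diagonal, hsingle i j]
    by_cases hij : i = j
    · rw [if_pos hij, if_pos hij, hE]
    · rw [if_neg hij, if_neg hij]
      have : (diagonal (0 : Fin n → ℂ)) = 0 := by
        rw [show (0 : Fin n → ℂ) = fun _ => 0 from rfl, diagonal_zero]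
      rw [this, Matrix.mul_zero, Matrix.zero_mul]
  have hEproj : ∀ i, E i * E i = E i := fun i => by rw [hEmul, if_pos rfl]
  have hdiag : ∀ (f : Fin n → ℂ), diagonal f = ∑ i, f i • diagonal (Pi.single i 1) := by
    intro f
    ext j k
    simp only [Matrix.sum_apply, Matrix.smul_apply, diagonal_apply, Pi.single_apply,
      smul_eq_mul, mul_ite, mul_one, mul_zero]
    by_cases hjk : j = k <;> simp [hjk, Finset.sum_ite_eq']
  have hHsum : H = ∑ i, (c i : ℂ) • E i := by
    conv_lhs => rw [hH.spectral_theorem, Unitary.conjStarAlgAut_apply]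
    rw [← hU, hdiag (RCLike.ofReal ∘ c), Finset.mul_sum, Finset.sum_mul]
    refine Finset.sum_congr rfl fun i _ => ?_
    simp only [Function.comp_apply, smul_mul_assoc, mul_smul_comm, hE]
    rfl
  have hH2sum : H * H = ∑ i, ((c i : ℂ) ^ 2) • E i := by
    conv_lhs => rw [hHsum]
    exact sum_smul_mul_ortho E (fun i => (c i : ℂ)) hEmul
  set Q : Fin n → Matrix (Fin m) (Fin m) ℂ := fun i => Φ (E i) with hQ
  have hQproj : ∀ i, (Q i).IsHermitian ∧ Q i * Q i = Q i :=
    fun i => hproj _ (hEherm i) (hEproj i)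
  have hQmul : ∀ i j, Q i * Q j = if i = j then Q i else 0 := by
    intro i j
    by_cases hij : i = j
    · rw [if_pos hij, hij, (hQproj j).2]
    · rw [if_neg hij]
      have hij' : E i * E j = 0 := by rw [hEmul, if_neg hij]
      have hji' : E j * E i = 0 := by
        rw [hEmul, if_neg (fun hh => hij hh.symm)]
      have hsumHerm : (E i + E j).IsHermitian := (hEherm i).add (hEherm j)
      have hsumProj : (E i + E j) * (E i + E j) = E i + E j := by
        rw [add_mul, mul_add, mul_add, hEproj, hEproj, hij', hji', add_zero, zero_add]
      have hΦadd : Φ (E i + E j) = Q i + Q j :=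
        hadd _ _ (hEherm i) (hEproj i) (hEherm j) (hEproj j) hij'
      have hP := (hproj _ hsumHerm hsumProj).2
      rw [hΦadd] at hP
      have hanti : Q i * Q j + Q j * Q i = 0 := by
        have expand : Q i * Q j + Q j * Q i
            = (Q i + Q j) * (Q i + Q j) - Q i * Q i - Q j * Q j := by noncomm_ring
        rw [expand, hP, (hQproj i).2, (hQproj j).2]
        abel
      exact ortho_of_anticomm _ _ (hQproj i).2 hanti
  have hΦH : Φ H = ∑ i, (c i : ℂ) • Q i := by
    rw [hHsum, map_sum]
    exact Finset.sum_congr rfl fun i _ => by rw [Φ.map_smul]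
  constructor
  · rw [hΦH, Matrix.IsHermitian, conjTranspose_sum]
    refine Finset.sum_congr rfl fun i _ => ?_
    rw [conjTranspose_smul, (hQproj i).1.eq]
    congr 1
    exact Complex.conj_ofReal _
  · have hΦH2 : Φ (H * H) = ∑ i, ((c i : ℂ) ^ 2) • Q i := by
      rw [hH2sum, map_sum]
      exact Finset.sum_congr rfl fun i _ => by rw [Φ.map_smul]
    rw [hΦH2, hΦH]
    exact (sum_smul_mul_ortho Q (fun i => (c i : ℂ)) hQmul).symm
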